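/- For every valid non-final configuration c and every action τ' that is applicable at c but with τ' ∉ dyna(c), the optimal tree changes: t*(τ'(c)) ≠ t*(c). (Lemma 3, second part.) -/

import Mathlib

/-!
Formalization of the span-based Structure/Label transition parsing system of
Cross & Huang (2016), "Span-Based Constituency Parsing with a Structure-Label
System and Provably Optimal Dynamic Oracles".

A configuration is `(z, σ, t)` where `z` is the step number, `σ` the stack of
span boundaries and `t` the set of brackets built so far.  A bracket is a
triple `(X, i, j)` with `X` a nonterminal label and `i < j ≤ n` a span.
-/

namespace SpanParser

structure Config (N : Type*) where
  z : ℕ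
  σ : List ℕ
  t : Finset (N × ℕ × ℕ)

variable {N : Type*}

/-- The span of a bracket. -/
def span (b : N × ℕ × ℕ) : ℕ × ℕ := b.2

/-- Top (rightmost) boundary of the stack. -/
def topJ (σ : List ℕ) : ℕ := σ.getLastD 0

/-- Second-to-top boundary of the stack. -/
def topI (σ : List ℕ) : ℕ := σ.dropLast.getLastD 0

/-- Parser actions: shift, combine, label-`X`, and nolabel. -/
inductive Action (N : Type*) where
  | sh : Action N
  | comb : Action N
  | label : N → Action N
  | nolabel : Action N

variable [DecidableEq N]

/-- Applicability of an action at a configuration (for sentence length `n`). -/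
def App (n : ℕ) (c : Config N) : Action N → Prop
  | .sh      => Even c.z ∧ c.σ ≠ [] ∧ topJ c.σ < n
  | .comb    => Even c.z ∧ 3 ≤ c.σ.length
  | .label _ => Odd c.z ∧ 2 ≤ c.σ.length
  | .nolabel => Odd c.z ∧ 2 ≤ c.σ.length ∧ c.z < 4 * n - 1

/-- The result `τ(c)` of applying action `τ` to configuration `c`. -/
def doAct (c : Config N) : Action N → Config N
  | .sh      => ⟨c.z + 1, c.σ ++ [topJ c.σ + 1], c.t⟩
  | .comb    => ⟨c.z + 1, c.σ.dropLast.dropLast ++ [topJ c.σ], c.t⟩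
  | .label X => ⟨c.z + 1, c.σ, insert (X, topI c.σ, topJ c.σ) c.t⟩
  | .nolabel => ⟨c.z + 1, c.σ, c.t⟩

/-- The initial configuration `(0, [0], ∅)`. -/
def initial (N : Type*) : Config N := ⟨0, [0], ∅⟩

/-- One transition step `c ⊢ c'`. -/
def Step (n : ℕ) (c c' : Config N) : Prop := ∃ a, App n c a ∧ c' = doAct c a

/-- `⊢*`: reflexive-transitive closure of the transition relation. -/
def Reaches (n : ℕ) : Config N → Config N → Prop := Relation.ReflTransGen (Step n)

/-- A configuration is valid if it is reachable from the initial configuration. -/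
def Valid (n : ℕ) (c : Config N) : Prop := Reaches n (initial N) c

/-- A final configuration: `σ = [0, n]` and `z = 4n - 2`. -/
def Final (n : ℕ) (c : Config N) : Prop := c.σ = [0, n] ∧ c.z = 4 * n - 2

/-- `D(c)`: the set of trees of final configurations reachable from `c`. -/
def Dset (n : ℕ) (c : Config N) : Set (Finset (N × ℕ × ℕ)) :=
  {t' | ∃ c', Reaches n c c' ∧ Final n c' ∧ c'.t = t'}

/-- `(i,j) ⪯ (p,q)`: span `(i,j)` is encompassed by `(p,q)`, i.e. `p ≤ i < j ≤ q`. -/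
def Enc (s₁ s₂ : ℕ × ℕ) : Prop := s₂.1 ≤ s₁.1 ∧ s₁.1 < s₁.2 ∧ s₁.2 ≤ s₂.2

/-- `(i,j) ≺ (p,q)`: strict encompassment. -/
def SEnc (s₁ s₂ : ℕ × ℕ) : Prop := Enc s₁ s₂ ∧ s₁ ≠ s₂

/-- `tG` is a gold tree for sentence length `n`: valid spans, pairwise-distinct
spans, pairwise non-crossing spans, and exactly one bracket with span `(0, n)`
(uniqueness follows from distinctness of spans). -/
structure IsGold (n : ℕ) (tG : Finset (N × ℕ × ℕ)) : Prop where
  validSpans : ∀ b ∈ tG, (span b).1 < (span b).2 ∧ (span b).2 ≤ n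
  distinctSpans : ∀ b₁ ∈ tG, ∀ b₂ ∈ tG, span b₁ = span b₂ → b₁ = b₂
  noncrossing : ∀ b₁ ∈ tG, ∀ b₂ ∈ tG,
    Enc (span b₁) (span b₂) ∨ Enc (span b₂) (span b₁) ∨
    (span b₁).2 ≤ (span b₂).1 ∨ (span b₂).2 ≤ (span b₁).1
  root : ∃ X, (X, 0, n) ∈ tG

open Classical in
/-- `left(c)`: gold brackets (strictly, at even steps) encompassing the top
span whose left boundary occurs on the stack. -/
noncomputable def leftSet (tG : Finset (N × ℕ × ℕ)) (c : Config N) :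
    Finset (N × ℕ × ℕ) :=
  tG.filter fun b =>
    (if Even c.z then SEnc (topI c.σ, topJ c.σ) (span b)
     else Enc (topI c.σ, topJ c.σ) (span b)) ∧ (span b).1 ∈ c.σ

open Classical in
/-- `right(c)`: gold brackets entirely on the queue. -/
noncomputable def rightSet (tG : Finset (N × ℕ × ℕ)) (c : Config N) :
    Finset (N × ℕ × ℕ) :=
  tG.filter fun b => topJ c.σ ≤ (span b).1

open Classical in
/-- `reach(c)`: the reachable gold brackets (all of `t_G` at the initial
configuration, whose stack has fewer than two boundaries). -/
noncomputable def reach (tG : Finset (N × ℕ × ℕ)) (c : Config N) :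
    Finset (N × ℕ × ℕ) :=
  if c.σ.length < 2 then tG else leftSet tG c ∪ rightSet tG c

/-- The optimal tree `t*(c) = t ∪ reach(c)`. -/
noncomputable def tstar (tG : Finset (N × ℕ × ℕ)) (c : Config N) :
    Finset (N × ℕ × ℕ) :=
  c.t ∪ reach tG c

/-- `b = next(c)`: the `≺`-minimal element of `left(c)`. -/
def IsNext (tG : Finset (N × ℕ × ℕ)) (c : Config N) (b : N × ℕ × ℕ) : Prop :=
  b ∈ leftSet tG c ∧ ∀ b' ∈ leftSet tG c, Enc (span b) (span b')

/-- The dynamic-oracle policy `dyna(c)` as a predicate on actions. -/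
def Dyna (tG : Finset (N × ℕ × ℕ)) (c : Config N) (a : Action N) : Prop :=
  if c.σ.length < 2 then a = Action.sh
  else if Even c.z then
    ∃ b, IsNext tG c b ∧
      (((span b).1 = topI c.σ ∧ topJ c.σ < (span b).2 ∧ a = Action.sh) ∨
       ((span b).1 < topI c.σ ∧ (span b).2 = topJ c.σ ∧ a = Action.comb) ∨
       ((span b).1 < topI c.σ ∧ topJ c.σ < (span b).2 ∧
          (a = Action.sh ∨ a = Action.comb)))
  else
    (∃ X, (X, topI c.σ, topJ c.σ) ∈ tG ∧ a = Action.label X) ∨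
    ((∀ X, (X, topI c.σ, topJ c.σ) ∉ tG) ∧ a = Action.nolabel)

/-- `F1` of a predicted bracket set `t'` against the gold tree `tG`
(`0` when `t' ∩ tG = ∅`). -/
noncomputable def f1 (tG t' : Finset (N × ℕ × ℕ)) : ℝ :=
  if t' ∩ tG = ∅ then 0
  else
    (2 * (((t' ∩ tG).card : ℝ) / (tG.card : ℝ)) * (((t' ∩ tG).card : ℝ) / (t'.card : ℝ))) /
      ((((t' ∩ tG).card : ℝ) / (tG.card : ℝ)) + (((t' ∩ tG).card : ℝ) / (t'.card : ℝ)))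

/-- `F1(c)`: the best `F1` among trees reachable from `c`. -/
noncomputable def configF1 (n : ℕ) (tG : Finset (N × ℕ × ℕ)) (c : Config N) : ℝ :=
  sSup (f1 tG '' Dset n c)

/-- A run of (applicable) actions from one configuration to another. -/
inductive Run (n : ℕ) : Config N → List (Action N) → Config N → Prop
  | refl (c : Config N) : Run n c [] c
  | step {c c' : Config N} {as : List (Action N)} (a : Action N)
      (happ : App n c a) (h : Run n (doAct c a) as c') : Run n c (a :: as) c'

/-- A run all of whose actions follow the dynamic oracle. -/
inductive DynaRun (n : ℕ) (tG : Finset (N × ℕ × ℕ)) : Config N → Config N → Prop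
  | refl (c : Config N) : DynaRun n tG c c
  | step {c c' : Config N} (a : Action N) (happ : App n c a) (hdyna : Dyna tG c a)
      (h : DynaRun n tG (doAct c a) c') : DynaRun n tG c c'

def isSh : Action N → Bool
  | .sh => true
  | _ => false

def isComb : Action N → Bool
  | .comb => true
  | _ => false

/-- Label-step actions: `label-X` or `nolabel`. -/
def isLabelStep : Action N → Bool
  | .label _ => true
  | .nolabel => true
  | _ => false


/-! ### Auxiliary lemmas -/

section Aux

lemma getLastD_eq (l : List ℕ) (h : l ≠ []) : l.getLastD 0 = l.getLast h := by
  rw [List.getLastD_eq_getLast?, List.getLast?_eq_getLast h, Option.getD_some]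

lemma getLastD_mem (l : List ℕ) (h : l ≠ []) : l.getLastD 0 ∈ l := by
  rw [getLastD_eq l h]; exact List.getLast_mem h

lemma dropLast_ne_nil {l : List ℕ} (hl : 2 ≤ l.length) : l.dropLast ≠ [] := by
  have := l.length_dropLast
  intro h; rw [h] at this; simp at this; omega

lemma topJ_concat (l : List ℕ) (x : ℕ) : topJ (l ++ [x]) = x := by simp [topJ]

lemma topI_concat (l : List ℕ) (x : ℕ) : topI (l ++ [x]) = topJ l := by
  simp [topI, topJ]

lemma topI_eq (l : List ℕ) : topI l = topJ l.dropLast := rfl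

lemma topJ_mem (l : List ℕ) (h : l ≠ []) : topJ l ∈ l := getLastD_mem l h

lemma topI_mem (l : List ℕ) (hl : 2 ≤ l.length) : topI l ∈ l :=
  (List.dropLast_sublist l).subset (getLastD_mem _ (dropLast_ne_nil hl))

lemma topI_lt_topJ (l : List ℕ) (hc : List.Chain' (· < ·) l) (hl : 2 ≤ l.length) :
    topI l < topJ l := by
  have hne : l ≠ [] := by rintro rfl; simp at hl
  have hd : l.dropLast ≠ [] := dropLast_ne_nil hl
  have hc2 := hc
  rw [← List.dropLast_append_getLast hne] at hc2
  unfold List.Chain' at hc2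
  rw [List.isChain_append] at hc2
  obtain ⟨-, -, h3⟩ := hc2
  have := h3 (l.dropLast.getLast hd) (by rw [List.getLast?_eq_getLast hd]; rfl)
      (l.getLast hne) rfl
  show l.dropLast.getLastD 0 < l.getLastD 0
  rw [getLastD_eq _ hd, getLastD_eq _ hne]
  exact this

lemma head?_dropLast {l : List ℕ} (h : l.dropLast ≠ []) : l.dropLast.head? = l.head? := by
  cases l with
  | nil => simp at h
  | cons a t => cases t with
    | nil => simp at h
    | cons b t => simp [List.dropLast]

lemma head?_concat {l : List ℕ} (h : l ≠ []) (x : ℕ) : (l ++ [x]).head? = l.head? := by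
  cases l with
  | nil => simp at h
  | cons a t => simp

variable {n : ℕ} {tG : Finset (N × ℕ × ℕ)} {c : Config N}

/-- The invariant maintained by all valid configurations. -/
structure Inv (n : ℕ) (c : Config N) : Prop where
  hne : c.σ ≠ []
  hhead : c.σ.head? = some 0
  hchain : c.σ.Chain' (· < ·)
  hub : ∀ x ∈ c.σ, x ≤ n
  ht : ∀ b ∈ c.t, (span b).2 < topJ c.σ ∨
        ((span b).2 = topJ c.σ ∧ topI c.σ ≤ (span b).1 ∧
          (¬ Even c.z → topI c.σ < (span b).1))

lemma inv_step {c c' : Config N} (hi : Inv n c) (h : Step n c c') : Inv n c' := by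
  obtain ⟨a, happ, rfl⟩ := h
  cases a with
  | sh =>
    obtain ⟨hev, hne, hlt⟩ := happ
    refine ⟨by simp [doAct], ?_, ?_, ?_, ?_⟩
    · show (c.σ ++ [topJ c.σ + 1]).head? = some 0
      rw [head?_concat hi.hne]; exact hi.hhead
    · show (c.σ ++ [topJ c.σ + 1]).Chain' (· < ·)
      unfold List.Chain'
      rw [List.isChain_append]
      refine ⟨hi.hchain, List.isChain_singleton _, ?_⟩
      intro x hx y hy
      rw [List.getLast?_eq_getLast hi.hne, Option.mem_def, Option.some_inj] at hx
      simp only [List.head?_cons, Option.mem_def, Option.some_inj] at hy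
      subst hx; subst hy
      rw [← getLastD_eq _ hi.hne]; exact Nat.lt_succ_self _
    · intro x hx
      rcases List.mem_append.mp hx with h | h
      · exact hi.hub x h
      · simp only [List.mem_singleton] at h; omega
    · intro b hb
      have := hi.ht b hb
      have hJ : topJ (c.σ ++ [topJ c.σ + 1]) = topJ c.σ + 1 := topJ_concat _ _
      show (span b).2 < topJ (c.σ ++ [topJ c.σ + 1]) ∨ _
      rw [hJ]; left; omega
  | comb =>
    obtain ⟨hev, hlen⟩ := happ
    have hd1 : c.σ.dropLast ≠ [] := dropLast_ne_nil (by omega)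
    have hd1len : 2 ≤ c.σ.dropLast.length := by
      have := c.σ.length_dropLast; omega
    have hd2 : c.σ.dropLast.dropLast ≠ [] := dropLast_ne_nil hd1len
    have hchain1 : c.σ.dropLast.Chain' (· < ·) :=
      hi.hchain.sublist (List.dropLast_sublist _)
    have hlt2 : topJ c.σ.dropLast.dropLast < topI c.σ := by
      rw [topI_eq]
      exact topI_lt_topJ _ hchain1 hd1len
    have hIJ : topI c.σ < topJ c.σ := topI_lt_topJ _ hi.hchain (by omega)
    refine ⟨by simp [doAct], ?_, ?_, ?_, ?_⟩
    · show (c.σ.dropLast.dropLast ++ [topJ c.σ]).head? = some 0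
      rw [head?_concat hd2, head?_dropLast hd2, head?_dropLast hd1]
      exact hi.hhead
    · show (c.σ.dropLast.dropLast ++ [topJ c.σ]).Chain' (· < ·)
      unfold List.Chain'
      rw [List.isChain_append]
      refine ⟨(hchain1.sublist (List.dropLast_sublist _)), List.isChain_singleton _, ?_⟩
      intro x hx y hy
      rw [List.getLast?_eq_getLast hd2, Option.mem_def, Option.some_inj] at hx
      simp only [List.head?_cons, Option.mem_def, Option.some_inj] at hy
      subst hx; subst hy
      have : topJ c.σ.dropLast.dropLast = c.σ.dropLast.dropLast.getLast hd2 :=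
        getLastD_eq _ hd2
      rw [← this]; omega
    · intro x hx
      rcases List.mem_append.mp hx with h | h
      · exact hi.hub x ((List.dropLast_sublist _).subset
          ((List.dropLast_sublist _).subset h))
      · simp only [List.mem_singleton] at h
        subst h; exact hi.hub _ (topJ_mem _ hi.hne)
    · intro b hb
      have := hi.ht b hb
      have hJ : topJ (c.σ.dropLast.dropLast ++ [topJ c.σ]) = topJ c.σ := topJ_concat _ _
      have hI : topI (c.σ.dropLast.dropLast ++ [topJ c.σ]) = topJ c.σ.dropLast.dropLast :=
        topI_concat _ _
      show (span b).2 < topJ (c.σ.dropLast.dropLast ++ [topJ c.σ]) ∨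
        ((span b).2 = topJ (c.σ.dropLast.dropLast ++ [topJ c.σ]) ∧
          topI (c.σ.dropLast.dropLast ++ [topJ c.σ]) ≤ (span b).1 ∧
          (¬ Even (c.z + 1) → topI (c.σ.dropLast.dropLast ++ [topJ c.σ]) < (span b).1))
      rw [hJ, hI]
      rcases this with h | ⟨h1, h2, -⟩
      · left; exact h
      · right; exact ⟨h1, by omega, fun _ => by omega⟩
  | label X =>
    obtain ⟨hodd, hlen⟩ := happ
    have hev' : Even (c.z + 1) := Odd.add_one hodd
    refine ⟨hi.hne, hi.hhead, hi.hchain, hi.hub, ?_⟩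
    intro b hb
    show (span b).2 < topJ c.σ ∨ ((span b).2 = topJ c.σ ∧ topI c.σ ≤ (span b).1 ∧
      (¬ Even (c.z + 1) → topI c.σ < (span b).1))
    rcases Finset.mem_insert.mp hb with rfl | hb
    · right; exact ⟨rfl, le_refl _, fun h => absurd hev' h⟩
    · rcases hi.ht b hb with h | ⟨h1, h2, -⟩
      · left; exact h
      · right; exact ⟨h1, h2, fun h => absurd hev' h⟩
  | nolabel =>
    obtain ⟨hodd, hlen, -⟩ := happ
    have hev' : Even (c.z + 1) := Odd.add_one hodd
    refine ⟨hi.hne, hi.hhead, hi.hchain, hi.hub, ?_⟩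
    intro b hb
    rcases hi.ht b hb with h | ⟨h1, h2, -⟩
    · left; exact h
    · right; exact ⟨h1, h2, fun h => absurd hev' h⟩

lemma inv_valid {c : Config N} (hc : Valid n c) : Inv n c := by
  induction hc with
  | refl =>
    exact ⟨by simp [initial], by simp [initial], by unfold List.Chain'; exact List.isChain_singleton _,
      by simp [initial], by simp [initial]⟩
  | tail _ hstep ih => exact inv_step ih hstep

open Classical in
lemma mem_leftSet {b : N × ℕ × ℕ} :
    b ∈ leftSet tG c ↔ b ∈ tG ∧
      (if Even c.z then SEnc (topI c.σ, topJ c.σ) (span b)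
       else Enc (topI c.σ, topJ c.σ) (span b)) ∧ (span b).1 ∈ c.σ := by
  unfold leftSet
  exact Finset.mem_filter

open Classical in
lemma mem_rightSet {b : N × ℕ × ℕ} :
    b ∈ rightSet tG c ↔ b ∈ tG ∧ topJ c.σ ≤ (span b).1 := by
  unfold rightSet; rw [Finset.mem_filter]

lemma leftSet_subset : leftSet tG c ⊆ tG := fun b hb => (mem_leftSet.mp hb).1

lemma reach_subset : reach tG c ⊆ tG := by
  rw [reach]
  split
  · exact subset_rfl
  · intro b hb
    rcases Finset.mem_union.mp hb with h | h
    · exact (mem_leftSet.mp h).1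
    · exact (mem_rightSet.mp h).1

/-- Any two gold brackets both encompassing a nonempty span are comparable. -/
lemma gold_comparable (hG : IsGold n tG) {b₁ b₂ : N × ℕ × ℕ} (h₁ : b₁ ∈ tG)
    (h₂ : b₂ ∈ tG) {i j : ℕ} (hij : i < j) (e₁ : Enc (i, j) (span b₁))
    (e₂ : Enc (i, j) (span b₂)) :
    Enc (span b₁) (span b₂) ∨ Enc (span b₂) (span b₁) := by
  have := hG.noncrossing b₁ h₁ b₂ h₂
  obtain ⟨a1, b1, c1⟩ := e₁
  obtain ⟨a2, b2, c2⟩ := e₂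
  rcases this with h | h | h | h
  · exact Or.inl h
  · exact Or.inr h
  · exfalso; omega
  · exfalso; omega

/-- If `left(c)` is nonempty then `next(c)` exists. -/
lemma exists_isNext (hG : IsGold n tG) (hij : topI c.σ < topJ c.σ)
    (hne : (leftSet tG c).Nonempty) : ∃ b, IsNext tG c b := by
  obtain ⟨b, hb, hmin⟩ := Finset.exists_min_image (leftSet tG c)
    (fun b => (span b).2 - (span b).1) hne
  refine ⟨b, hb, ?_⟩
  intro b' hb'
  have hbt := leftSet_subset (c := c) hb
  have hbt' := leftSet_subset (c := c) hb'
  have e₁ : Enc (topI c.σ, topJ c.σ) (span b) := by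
    rcases mem_leftSet.mp hb with ⟨-, h, -⟩
    split at h
    · exact h.1
    · exact h
  have e₂ : Enc (topI c.σ, topJ c.σ) (span b') := by
    rcases mem_leftSet.mp hb' with ⟨-, h, -⟩
    split at h
    · exact h.1
    · exact h
  rcases gold_comparable hG hbt hbt' hij e₁ e₂ with h | h
  · exact h
  · -- `b'` encompassed by `b`; by minimality the spans coincide.
    have hmin' := hmin b' hb'
    obtain ⟨v1, v2⟩ := hG.validSpans b hbt
    obtain ⟨w1, w2⟩ := hG.validSpans b' hbt'
    obtain ⟨a1, b1, c1⟩ := h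
    refine ⟨by omega, by omega, by omega⟩

end Aux

/-- Lemma 3, second part: any applicable non-oracle action changes the
optimal tree: `t*(τ'(c)) ≠ t*(c)`. -/
theorem tstar_changed_by_nondyna (n : ℕ) (hn : 1 ≤ n) (tG : Finset (N × ℕ × ℕ))
    (hG : IsGold n tG) (c : Config N) (hc : Valid n c) (hnf : ¬ Final n c)
    (a : Action N) (happ : App n c a) (hna : ¬ Dyna tG c a) :
    tstar tG (doAct c a) ≠ tstar tG c := by
  have hi := inv_valid hc
  have h0mem : (0 : ℕ) ∈ c.σ := List.mem_of_mem_head? (by rw [hi.hhead]; rfl)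
  have hJn : topJ c.σ ≤ n := hi.hub _ (topJ_mem _ hi.hne)
  cases a with
  | label X =>
    obtain ⟨hodd, hlen⟩ := happ
    have hnEv : ¬ Even c.z := Nat.not_even_iff_odd.mpr hodd
    have hXG : (X, topI c.σ, topJ c.σ) ∉ tG := by
      intro hmem
      apply hna
      unfold Dyna
      rw [if_neg (by omega), if_neg hnEv]
      exact Or.inl ⟨X, hmem, rfl⟩
    intro heq
    have h1 : (X, topI c.σ, topJ c.σ) ∈ tstar tG (doAct c (Action.label X)) := by
      simp only [tstar, doAct]
      exact Finset.mem_union_left _ (Finset.mem_insert_self _ _)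
    rw [heq] at h1
    rcases Finset.mem_union.mp h1 with h | h
    · rcases hi.ht _ h with h' | ⟨-, -, h3'⟩
      · exact absurd h' (lt_irrefl _)
      · exact absurd (h3' hnEv) (lt_irrefl _)
    · exact hXG (reach_subset h)
  | nolabel =>
    obtain ⟨hodd, hlen, -⟩ := happ
    have hnEv : ¬ Even c.z := Nat.not_even_iff_odd.mpr hodd
    have hIJ : topI c.σ < topJ c.σ := topI_lt_topJ _ hi.hchain hlen
    have hex : ∃ X, (X, topI c.σ, topJ c.σ) ∈ tG := by
      by_contra h
      push_neg at h
      apply hna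
      unfold Dyna
      rw [if_neg (by omega), if_neg hnEv]
      exact Or.inr ⟨h, rfl⟩
    obtain ⟨X, hXG⟩ := hex
    intro heq
    have hbL : (X, topI c.σ, topJ c.σ) ∈ leftSet tG c :=
      mem_leftSet.mpr ⟨hXG, by rw [if_neg hnEv]; exact ⟨le_refl _, hIJ, le_refl _⟩,
        topI_mem _ hlen⟩
    have h1 : (X, topI c.σ, topJ c.σ) ∈ tstar tG c := by
      simp only [tstar]
      refine Finset.mem_union_right _ ?_
      unfold reach
      rw [if_neg (by omega)]
      exact Finset.mem_union_left _ hbL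
    rw [← heq] at h1
    simp only [tstar] at h1
    rcases Finset.mem_union.mp h1 with h | h
    · rcases hi.ht _ h with h' | ⟨-, -, h3'⟩
      · exact absurd h' (lt_irrefl _)
      · exact absurd (h3' hnEv) (lt_irrefl _)
    · unfold reach at h
      rw [if_neg (by simp only [doAct]; omega)] at h
      rcases Finset.mem_union.mp h with h | h
      · have hEnc := (mem_leftSet.mp h).2.1
        simp only [doAct] at hEnc
        simp only [Odd.add_one hodd, ↓reduceIte] at hEnc
        exact hEnc.2 rfl
      · have := (mem_rightSet.mp h).2
        simp only [doAct, span] at this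
        omega
  | sh =>
    obtain ⟨hEv, hσne, hJlt⟩ := happ
    have hlen : 2 ≤ c.σ.length := by
      by_contra h
      apply hna
      unfold Dyna
      rw [if_pos (by omega)]
    have hIJ : topI c.σ < topJ c.σ := topI_lt_topJ _ hi.hchain hlen
    obtain ⟨X0, hX0⟩ := hG.root
    have hrootL : (X0, 0, n) ∈ leftSet tG c := by
      refine mem_leftSet.mpr ⟨hX0, ?_, h0mem⟩
      rw [if_pos hEv]
      refine ⟨⟨Nat.zero_le _, hIJ, hJn⟩, ?_⟩
      simp only [span, ne_eq, Prod.mk.injEq, not_and]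
      omega
    obtain ⟨b, hbL, hmin⟩ := exists_isNext hG hIJ ⟨_, hrootL⟩
    have hbG := leftSet_subset hbL
    have hsenc : SEnc (topI c.σ, topJ c.σ) (span b) := by
      have := (mem_leftSet.mp hbL).2.1
      rwa [if_pos hEv] at this
    obtain ⟨⟨hp, hij', hq⟩, hne'⟩ := hsenc
    have h2 : ¬ (((span b).1 = topI c.σ ∧ topJ c.σ < (span b).2 ∧
          (Action.sh : Action N) = Action.sh) ∨
        ((span b).1 < topI c.σ ∧ (span b).2 = topJ c.σ ∧
          (Action.sh : Action N) = Action.comb) ∨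
        ((span b).1 < topI c.σ ∧ topJ c.σ < (span b).2 ∧
          ((Action.sh : Action N) = Action.sh ∨ (Action.sh : Action N) = Action.comb))) := by
      intro hcon
      apply hna
      unfold Dyna
      rw [if_neg (by omega), if_pos hEv]
      exact ⟨b, ⟨hbL, hmin⟩, hcon⟩
    have hq' : (span b).2 = topJ c.σ := by
      by_contra hq2
      have hq3 : topJ c.σ < (span b).2 := by omega
      rcases Nat.lt_or_ge (span b).1 (topI c.σ) with h | h
      · exact h2 (Or.inr (Or.inr ⟨h, hq3, Or.inl rfl⟩))
      · exact h2 (Or.inl ⟨le_antisymm hp h, hq3, rfl⟩)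
    have hp' : (span b).1 < topI c.σ := by
      rcases Nat.lt_or_ge (span b).1 (topI c.σ) with h | h
      · exact h
      · exact absurd (Prod.ext_iff.mpr ⟨(le_antisymm hp h).symm, hq'.symm⟩) hne'
    intro heq
    have h1 : b ∈ tstar tG c := by
      simp only [tstar]
      refine Finset.mem_union_right _ ?_
      unfold reach
      rw [if_neg (by omega)]
      exact Finset.mem_union_left _ hbL
    rw [← heq] at h1
    simp only [tstar] at h1
    rcases Finset.mem_union.mp h1 with h | h
    · simp only [doAct] at h
      rcases hi.ht _ h with h' | ⟨h1', h2', -⟩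
      · omega
      · omega
    · unfold reach at h
      rw [if_neg (by simp only [doAct]; simp; omega)] at h
      rcases Finset.mem_union.mp h with h | h
      · have hEnc := (mem_leftSet.mp h).2.1
        simp only [doAct] at hEnc
        simp only [show ¬ Even (c.z + 1) by simp [Nat.even_add_one, hEv], ↓reduceIte] at hEnc
        rw [topJ_concat] at hEnc
        obtain ⟨-, -, e3⟩ := hEnc
        omega
      · have := (mem_rightSet.mp h).2
        simp only [doAct] at this
        rw [topJ_concat] at this
        omega
  | comb =>
    obtain ⟨hEv, hlen3⟩ := happ
    have hlen : 2 ≤ c.σ.length := by omega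
    have hIJ : topI c.σ < topJ c.σ := topI_lt_topJ _ hi.hchain hlen
    have hd1len : 2 ≤ c.σ.dropLast.length := by
      have := c.σ.length_dropLast; omega
    have hchain1 : c.σ.dropLast.Chain' (· < ·) :=
      hi.hchain.sublist (List.dropLast_sublist _)
    have hlt2 : topJ c.σ.dropLast.dropLast < topI c.σ := by
      rw [topI_eq]
      exact topI_lt_topJ _ hchain1 hd1len
    have hIpos : 0 < topI c.σ := by
      have h' := topI_lt_topJ _ hchain1 hd1len
      rw [topI_eq]
      omega
    obtain ⟨X0, hX0⟩ := hG.root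
    have hrootL : (X0, 0, n) ∈ leftSet tG c := by
      refine mem_leftSet.mpr ⟨hX0, ?_, h0mem⟩
      rw [if_pos hEv]
      refine ⟨⟨Nat.zero_le _, hIJ, hJn⟩, ?_⟩
      simp only [span, ne_eq, Prod.mk.injEq, not_and]
      omega
    obtain ⟨b, hbL, hmin⟩ := exists_isNext hG hIJ ⟨_, hrootL⟩
    have hbG := leftSet_subset hbL
    have hsenc : SEnc (topI c.σ, topJ c.σ) (span b) := by
      have := (mem_leftSet.mp hbL).2.1
      rwa [if_pos hEv] at this
    obtain ⟨⟨hp, hij', hq⟩, hne'⟩ := hsenc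
    have h2 : ¬ (((span b).1 = topI c.σ ∧ topJ c.σ < (span b).2 ∧
          (Action.comb : Action N) = Action.sh) ∨
        ((span b).1 < topI c.σ ∧ (span b).2 = topJ c.σ ∧
          (Action.comb : Action N) = Action.comb) ∨
        ((span b).1 < topI c.σ ∧ topJ c.σ < (span b).2 ∧
          ((Action.comb : Action N) = Action.sh ∨ (Action.comb : Action N) = Action.comb))) := by
      intro hcon
      apply hna
      unfold Dyna
      rw [if_neg (by omega), if_pos hEv]
      exact ⟨b, ⟨hbL, hmin⟩, hcon⟩
    have hp' : (span b).1 = topI c.σ := by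
      rcases Nat.lt_or_ge (span b).1 (topI c.σ) with h | h
      · exfalso
        rcases Nat.lt_or_ge (topJ c.σ) (span b).2 with h' | h'
        · exact h2 (Or.inr (Or.inr ⟨h, h', Or.inr rfl⟩))
        · exact h2 (Or.inr (Or.inl ⟨h, le_antisymm h' hq, rfl⟩))
      · exact le_antisymm hp h
    have hq' : topJ c.σ < (span b).2 := by
      rcases Nat.lt_or_ge (topJ c.σ) (span b).2 with h | h
      · exact h
      · exact absurd (Prod.ext_iff.mpr ⟨hp'.symm, (le_antisymm h hq).symm⟩) hne'
    intro heq
    have h1 : b ∈ tstar tG c := by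
      simp only [tstar]
      refine Finset.mem_union_right _ ?_
      unfold reach
      rw [if_neg (by omega)]
      exact Finset.mem_union_left _ hbL
    rw [← heq] at h1
    simp only [tstar] at h1
    rcases Finset.mem_union.mp h1 with h | h
    · simp only [doAct] at h
      rcases hi.ht _ h with h' | ⟨h1', -, -⟩
      · omega
      · omega
    · unfold reach at h
      rw [if_neg (by simp only [doAct]; simp [List.length_dropLast]; omega)] at h
      rcases Finset.mem_union.mp h with h | h
      · have hEnc := (mem_leftSet.mp h).2.1
        simp only [doAct] at hEnc
        simp only [show ¬ Even (c.z + 1) by simp [Nat.even_add_one, hEv], ↓reduceIte] at hEnc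
        rw [topI_concat] at hEnc
        obtain ⟨e1, -, -⟩ := hEnc
        omega
      · have := (mem_rightSet.mp h).2
        simp only [doAct] at this
        rw [topJ_concat] at this
        omega

end SpanParser
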